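/- arXiv:2603.28940 — 2 statements merged into one kernel-verified Lean document; each statement's English description precedes it below -/
import Mathlib

section
/- For d ≥ 2 and 1 ≤ k ≤ n, the d-Hoggatt binomial coefficients satisfy the Pascal-type recurrence ⟨n+1 choose k⟩_d = f(d;n,k) · ⟨n choose k⟩_d + ⟨n choose k-1⟩_d, where f(d;n,k) = 1 + (1/⟨n+1-k⟩_d) · Σ_{i=1}^{d-1} ⟨n+1-k⟩_{d-i} · ⟨k⟩_i. -/
/-- The m-th simplicial j-polytopic number ⟨m⟩_j = C(m+j-1, j). -/
def sp (j m : ℕ) : ℕ := Nat.choose (m + j - 1) j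

/-- The d-simplitorial ⟨n⟩_d! = ∏_{k=1}^n ⟨k⟩_d, as a rational number. -/
def spFact (d n : ℕ) : ℚ := ∏ k ∈ Finset.Icc 1 n, (sp d k : ℚ)

/-- The d-Hoggatt binomial coefficient ⟨n choose k⟩_d. -/
def hog (d n k : ℕ) : ℚ := spFact d n / (spFact d k * spFact d (n - k))


lemma sp_zero (m : ℕ) : sp 0 m = 1 := by simp [sp]

lemma sp_pos (d m : ℕ) (hm : 1 ≤ m) : 0 < sp d m := Nat.choose_pos (by omega)

lemma sp_of_zero (i : ℕ) (hi : 1 ≤ i) : sp i 0 = 0 := by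
  unfold sp; exact Nat.choose_eq_zero_of_lt (by omega)

lemma sp_succ (j m : ℕ) : sp (j+1) (m+1) = sp (j+1) m + sp j (m+1) := by
  unfold sp
  have h1 : m + 1 + (j+1) - 1 = (m + j) + 1 := by omega
  have h2 : m + (j+1) - 1 = m + j := by omega
  have h3 : m + 1 + j - 1 = m + j := by omega
  rw [h1, h2, h3, Nat.choose_succ_succ]
  simp [Nat.succ_eq_add_one]
  omega

lemma key (a : ℕ) : ∀ d b : ℕ, ∑ i ∈ Finset.range (d+1), sp i a * sp (d-i) b = sp d (a+b) := by
  induction a with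
  | zero =>
    intro d b
    rw [Finset.sum_eq_single 0]
    · simp [sp_zero]
    · intro i hi h0
      obtain ⟨j, rfl⟩ := Nat.exists_eq_succ_of_ne_zero h0
      rw [sp_of_zero _ (by omega), zero_mul]
    · intro h; simp at h
  | succ a ih =>
    intro d
    induction d with
    | zero => intro b; simp [sp_zero, sp]
    | succ d ihd =>
      intro b
      rw [Finset.sum_range_succ']
      simp only [Nat.succ_sub_succ, Nat.sub_zero]
      have expand : ∑ i ∈ Finset.range (d+1), sp (i+1) (a+1) * sp (d-i) b
          = (∑ i ∈ Finset.range (d+1), sp (i+1) a * sp (d-i) b)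
            + ∑ i ∈ Finset.range (d+1), sp i (a+1) * sp (d-i) b := by
        rw [← Finset.sum_add_distrib]
        exact Finset.sum_congr rfl fun i _ => by rw [sp_succ, add_mul]
      have h2 : (∑ i ∈ Finset.range (d+1), sp (i+1) a * sp (d-i) b)
          + sp 0 a * sp (d+1) b = sp (d+1) (a+b) := by
        have := ih (d+1) b
        rw [Finset.sum_range_succ'] at this
        simpa [Nat.succ_sub_succ] using this
      have h3 := ihd b
      have h4 : sp (d+1) (a+1+b) = sp (d+1) (a+b) + sp d (a+b+1) := by
        have : a+1+b = (a+b)+1 := by omega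
        rw [this, sp_succ]
      rw [sp_zero] at h2
      rw [expand, h3, sp_zero, h4]
      have h5 : a + b + 1 = a + 1 + b := by omega
      rw [h5]
      omega


lemma key2 (e a b : ℕ) :
    sp (e+1) a + (∑ i ∈ Finset.Icc 1 e, sp (e+1-i) a * sp i b) + sp (e+1) b
      = sp (e+1) (a+b) := by
  have h := key b (e+1) a
  rw [Finset.sum_range_succ, Finset.sum_range_succ'] at h
  simp only [Nat.succ_sub_succ, Nat.sub_zero, Nat.sub_self, sp_zero, mul_one, one_mul] at h
  have hs : (∑ i ∈ Finset.Icc 1 e, sp (e+1-i) a * sp i b)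
      = ∑ i ∈ Finset.range e, sp (i+1) b * sp (e-i) a := by
    refine Finset.sum_nbij' (fun i => i - 1) (fun i => i + 1) ?_ ?_ ?_ ?_ ?_
    · intro i hi; simp only [Finset.mem_Icc] at hi; simp only [Finset.mem_range]; omega
    · intro i hi; simp only [Finset.mem_range] at hi; simp only [Finset.mem_Icc]; omega
    · intro i hi; simp only [Finset.mem_Icc] at hi; omega
    · intro i hi; simp only [Finset.mem_range] at hi; omega
    · intro i hi; simp only [Finset.mem_Icc] at hi
      have h1 : i - 1 + 1 = i := by omega
      have h2 : e - (i - 1) = e + 1 - i := by omega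
      rw [h1, h2, mul_comm]
  rw [hs]
  have hba : b + a = a + b := by omega
  rw [hba] at h
  omega


lemma spFact_succ (d n : ℕ) : spFact d (n+1) = spFact d n * sp d (n+1) := by
  unfold spFact
  rw [Finset.prod_Icc_succ_top (by omega : 1 ≤ n+1)]

lemma spFact_ne_zero (d n : ℕ) : spFact d n ≠ 0 := by
  unfold spFact
  rw [Finset.prod_ne_zero_iff]
  intro k hk
  simp only [Finset.mem_Icc] at hk
  exact_mod_cast (sp_pos d k hk.1).ne'

theorem hog_pascal (d n k : ℕ) (hd : 2 ≤ d) (hk1 : 1 ≤ k) (hk : k ≤ n) :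
    hog d (n + 1) k =
      (1 + (1 / (sp d (n + 1 - k) : ℚ)) *
          ∑ i ∈ Finset.Icc 1 (d - 1), (sp (d - i) (n + 1 - k) : ℚ) * (sp i k : ℚ)) *
        hog d n k + hog d n (k - 1) := by
  obtain ⟨j, rfl⟩ : ∃ j, k = j + 1 := ⟨k - 1, by omega⟩
  obtain ⟨a, rfl⟩ : ∃ a, n = j + 1 + a := ⟨n - (j + 1), by omega⟩
  obtain ⟨e, rfl⟩ : ∃ e, d = e + 1 := ⟨d - 1, by omega⟩
  have e1 : j + 1 + a + 1 - (j + 1) = a + 1 := by omega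
  have e2 : j + 1 + a - (j + 1) = a := by omega
  have e3 : j + 1 - 1 = j := by omega
  have e4 : j + 1 + a - j = a + 1 := by omega
  have e5 : e + 1 - 1 = e := by omega
  rw [hog, hog, hog, e1, e2, e3, e4, e5]
  have hkey : ((sp (e+1) (j + 1 + a + 1) : ℚ)) =
      (sp (e+1) (a+1) : ℚ)
        + (∑ i ∈ Finset.Icc 1 e, (sp (e+1-i) (a+1) : ℚ) * (sp i (j+1) : ℚ))
        + (sp (e+1) (j+1) : ℚ) := by
    have h := key2 e (a+1) (j+1)
    have hc : a + 1 + (j + 1) = j + 1 + a + 1 := by omega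
    rw [hc] at h
    exact_mod_cast h.symm
  rw [spFact_succ (e+1) (j+1+a), spFact_succ (e+1) a, spFact_succ (e+1) j, hkey]
  have hA : (sp (e+1) (a+1) : ℚ) ≠ 0 := by exact_mod_cast (sp_pos (e+1) (a+1) (by omega)).ne'
  have hB : (sp (e+1) (j+1) : ℚ) ≠ 0 := by exact_mod_cast (sp_pos (e+1) (j+1) (by omega)).ne'
  have hFj := spFact_ne_zero (e+1) j
  have hFa := spFact_ne_zero (e+1) a
  field_simp
end

section
/- For d ≥ 2 and twice-continuously-differentiable f, g (or polynomials), D_{S_d}(fg) = (D_{S_d} f)·g + f·(D_{S_d} g) + Σ_{k=1}^{d-1} C(d-1,k) (1/(k+1)!) x^k Σ_{i=1}^{k} C(k+1,i) f^{(k+1-i)} g^{(i)}. -/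
lemma iterDeriv_add {n : ℕ} {f g : ℝ → ℝ} (hf : ContDiff ℝ (n : ℕ∞) f)
    (hg : ContDiff ℝ (n : ℕ∞) g) (x : ℝ) :
    iteratedDeriv n (fun y => f y + g y) x = iteratedDeriv n f x + iteratedDeriv n g x := by
  simp only [iteratedDeriv_eq_iteratedFDeriv]
  rw [show (fun y => f y + g y) = f + g from rfl, iteratedFDeriv_add_apply (i := n) hf.contDiffAt hg.contDiffAt]
  rfl

lemma iterDeriv_mul {n : ℕ} {f g : ℝ → ℝ} (hf : ContDiff ℝ (n : ℕ∞) f)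
    (hg : ContDiff ℝ (n : ℕ∞) g) (x : ℝ) :
    iteratedDeriv n (fun y => f y * g y) x =
      ∑ i ∈ Finset.range (n + 1),
        (Nat.choose n i : ℝ) * iteratedDeriv (n - i) f x * iteratedDeriv i g x := by
  induction n generalizing f g x with
  | zero => simp
  | succ n IH =>
    have hf' : Differentiable ℝ f := hf.differentiable (by simp)
    have hg' : Differentiable ℝ g := hg.differentiable (by simp)
    have hfn : ContDiff ℝ (n : ℕ∞) f := hf.of_le (by exact_mod_cast Nat.cast_le.2 (Nat.le_succ n))
    have hgn : ContDiff ℝ (n : ℕ∞) g := hg.of_le (by exact_mod_cast Nat.cast_le.2 (Nat.le_succ n))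
    have hdf : ContDiff ℝ (n : ℕ∞) (deriv f) := by
      have := (contDiff_succ_iff_deriv.mp (show ContDiff ℝ ((n : WithTop ℕ∞) + 1) f by exact_mod_cast hf)).2.2
      exact_mod_cast this
    have hdg : ContDiff ℝ (n : ℕ∞) (deriv g) := by
      have := (contDiff_succ_iff_deriv.mp (show ContDiff ℝ ((n : WithTop ℕ∞) + 1) g by exact_mod_cast hg)).2.2
      exact_mod_cast this
    have hder : deriv (fun y => f y * g y) = fun y => deriv f y * g y + f y * deriv g y := by
      funext y
      exact deriv_mul (hf' y) (hg' y)
    rw [iteratedDeriv_succ', hder,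
      iterDeriv_add (hdf.mul hgn) (hfn.mul hdg), IH hdf hgn, IH hfn hdg]
    -- now combine
    have key : ∀ i, iteratedDeriv i (deriv f) x = iteratedDeriv (i + 1) f x := fun i => by
      rw [iteratedDeriv_succ']
    have key2 : ∀ i, iteratedDeriv i (deriv g) x = iteratedDeriv (i + 1) g x := fun i => by
      rw [iteratedDeriv_succ']
    simp only [key, key2]
    rw [Finset.sum_range_succ' (fun i => (Nat.choose (n+1) i : ℝ) * iteratedDeriv (n + 1 - i) f x * iteratedDeriv i g x)]
    have split : ∀ i ∈ Finset.range (n + 1),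
        (Nat.choose (n+1) (i+1) : ℝ) * iteratedDeriv (n + 1 - (i+1)) f x * iteratedDeriv (i+1) g x
          = (Nat.choose n i : ℝ) * iteratedDeriv (n - i) f x * iteratedDeriv (i+1) g x
            + (Nat.choose n (i+1) : ℝ) * iteratedDeriv (n + 1 - (i+1)) f x * iteratedDeriv (i+1) g x := by
      intro i _
      rw [Nat.succ_sub_succ, Nat.choose_succ_succ]
      push_cast
      ring
    rw [Finset.sum_congr rfl split, Finset.sum_add_distrib]
    have e2 : (∑ i ∈ Finset.range (n + 1),
        (Nat.choose n (i+1) : ℝ) * iteratedDeriv (n + 1 - (i+1)) f x * iteratedDeriv (i+1) g x)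
        + (Nat.choose (n+1) 0 : ℝ) * iteratedDeriv (n + 1 - 0) f x * iteratedDeriv 0 g x
        = ∑ i ∈ Finset.range (n + 1),
            (Nat.choose n i : ℝ) * iteratedDeriv (n - i + 1) f x * iteratedDeriv i g x := by
      have h0 : ((n+1).choose 0 : ℝ) = (n.choose 0 : ℝ) := by simp
      rw [h0, ← Finset.sum_range_succ' (fun i => (Nat.choose n i : ℝ) * iteratedDeriv (n + 1 - i) f x * iteratedDeriv i g x) (n+1),
        Finset.sum_range_succ]
      simp only [Nat.choose_succ_self, Nat.cast_zero, zero_mul, add_zero]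
      refine Finset.sum_congr rfl fun i hi => ?_
      have hin := Finset.mem_range.mp hi
      have hni : n + 1 - i = n - i + 1 := by omega
      rw [hni]
    linarith [e2]



/-- The simplicial d-polytopic derivative
D_{S_d} f(x) = Σ_{k=0}^{d-1} C(d-1,k)·(1/(k+1)!)·x^k·f^{(k+1)}(x). -/
noncomputable def DSd (d : ℕ) (f : ℝ → ℝ) : ℝ → ℝ := fun x =>
  ∑ k ∈ Finset.range d,
    (Nat.choose (d - 1) k : ℝ) / (Nat.factorial (k + 1) : ℝ) * x ^ k *
      iteratedDeriv (k + 1) f x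

theorem DSd_leibniz (d : ℕ) (hd : 2 ≤ d) (f g : ℝ → ℝ)
    (hf : ContDiff ℝ (d : ℕ∞) f) (hg : ContDiff ℝ (d : ℕ∞) g) (x : ℝ) :
    DSd d (fun y => f y * g y) x =
      DSd d f x * g x + f x * DSd d g x +
        ∑ k ∈ Finset.Icc 1 (d - 1),
          (Nat.choose (d - 1) k : ℝ) / (Nat.factorial (k + 1) : ℝ) * x ^ k *
            ∑ i ∈ Finset.Icc 1 k,
              (Nat.choose (k + 1) i : ℝ) * iteratedDeriv (k + 1 - i) f x *
                iteratedDeriv i g x := by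
  have hsum : ∀ k ∈ Finset.range d,
      (Nat.choose (d - 1) k : ℝ) / (Nat.factorial (k + 1) : ℝ) * x ^ k *
        iteratedDeriv (k + 1) (fun y => f y * g y) x =
      (Nat.choose (d - 1) k : ℝ) / (Nat.factorial (k + 1) : ℝ) * x ^ k *
        (iteratedDeriv (k + 1) f x * g x + f x * iteratedDeriv (k + 1) g x +
        ∑ i ∈ Finset.Icc 1 k,
          (Nat.choose (k + 1) i : ℝ) * iteratedDeriv (k + 1 - i) f x *
            iteratedDeriv i g x) := by
    intro k hk
    have hkd : k + 1 ≤ d := Finset.mem_range.mp hk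
    have hfk : ContDiff ℝ ((k + 1 : ℕ) : ℕ∞) f := hf.of_le (by exact_mod_cast hkd)
    have hgk : ContDiff ℝ ((k + 1 : ℕ) : ℕ∞) g := hg.of_le (by exact_mod_cast hkd)
    congr 1
    rw [iterDeriv_mul hfk hgk x, Finset.sum_range_succ,
      Finset.sum_range_succ' (fun i => (Nat.choose (k+1) i : ℝ) * iteratedDeriv (k + 1 - i) f x * iteratedDeriv i g x) k]
    have hicc : ∑ i ∈ Finset.Icc 1 k,
        (Nat.choose (k + 1) i : ℝ) * iteratedDeriv (k + 1 - i) f x * iteratedDeriv i g x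
        = ∑ i ∈ Finset.range k,
          (Nat.choose (k + 1) (i + 1) : ℝ) * iteratedDeriv (k + 1 - (i + 1)) f x * iteratedDeriv (i + 1) g x := by
      rw [← Finset.Ico_add_one_right_eq_Icc, Finset.sum_Ico_eq_sum_range]
      exact Finset.sum_congr (by norm_num) fun i _ => by rw [Nat.add_comm 1 i]
    rw [hicc]
    simp only [Nat.choose_zero_right, Nat.choose_self, Nat.cast_one, one_mul,
      Nat.sub_zero, Nat.sub_self, iteratedDeriv_zero]
    ring
  rw [show DSd d (fun y => f y * g y) x = ∑ k ∈ Finset.range d,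
      (Nat.choose (d - 1) k : ℝ) / (Nat.factorial (k + 1) : ℝ) * x ^ k *
        iteratedDeriv (k + 1) (fun y => f y * g y) x from rfl,
    Finset.sum_congr rfl hsum]
  simp only [mul_add, Finset.sum_add_distrib]
  congr 1
  · congr 1
    · rw [DSd, Finset.sum_mul]
      exact Finset.sum_congr rfl fun k _ => by ring
    · rw [DSd, Finset.mul_sum]
      exact Finset.sum_congr rfl fun k _ => by ring
  · refine (Finset.sum_subset (fun k hk => ?_) (fun k hk hk2 => ?_)).symm
    · have h := Finset.mem_Icc.mp hk
      exact Finset.mem_range.mpr (by omega)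
    · have h1 := Finset.mem_range.mp hk
      have h0 : k = 0 := by
        by_contra h
        exact hk2 (Finset.mem_Icc.mpr ⟨by omega, by omega⟩)
      subst h0
      simp
end
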